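/- Suppose ṗ(t) = s m(ψ(t)) + w with s > 0 constant, w ∈ ℝ² constant, m(ψ) = (cos ψ, sin ψ), and ṗ(t) ≠ 0 for all t. Let v̂ = ṗ/‖ṗ‖. Then d v̂/dt = −(s ψ̇/‖ṗ‖)(v̂ᵀ m(ψ)) E v̂, where E = [[0,1],[-1,0]]. -/

import Mathlib

open RealInnerProductSpace

/-- Action of the rotation matrix `E = !![0, 1; -1, 0]` on a vector of `ℝ²`. -/
noncomputable def Emap (v : EuclideanSpace ℝ (Fin 2)) : EuclideanSpace ℝ (Fin 2) :=
  WithLp.toLp 2 ![v 1, -v 0]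

/-- The unit-heading vector `m ψ = (cos ψ, sin ψ)`. -/
noncomputable def mvec (ψ : ℝ) : EuclideanSpace ℝ (Fin 2) := WithLp.toLp 2 ![Real.cos ψ, Real.sin ψ]

lemma hasDerivAt_E2 (f : ℝ → EuclideanSpace ℝ (Fin 2)) (f' : EuclideanSpace ℝ (Fin 2)) (t : ℝ)
    (h : ∀ i, HasDerivAt (fun t => f t i) (f' i) t) : HasDerivAt f f' t := by
  exact ((EuclideanSpace.equiv (Fin 2) ℝ).symm.toContinuousLinearMap.hasFDerivAt.comp_hasDerivAt
    t (hasDerivAt_pi.2 h))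

lemma aux0 (a b c sn k n : ℝ) (hn : n ≠ 0) (h : n^2 = a^2+b^2) :
    -(k / n * (n⁻¹ * a * c + n⁻¹ * b * sn)) * (n⁻¹ * b)
      = -((2*a*(-(k*sn)) + 2*b*(k*c))/(2*n)) / n^2 * a + n⁻¹ * (-(k*sn)) := by
  field_simp
  linear_combination (k*sn) * h

lemma aux1 (a b c sn k n : ℝ) (hn : n ≠ 0) (h : n^2 = a^2+b^2) :
    -(k / n * (n⁻¹ * a * c + n⁻¹ * b * sn)) * (-(n⁻¹ * a))
      = -((2*a*(-(k*sn)) + 2*b*(k*c))/(2*n)) / n^2 * b + n⁻¹ * (k*c) := by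
  field_simp
  linear_combination (-k*c) * h

theorem stmt12 (s : ℝ) (hs : 0 < s) (w : EuclideanSpace ℝ (Fin 2))
    (ψ : ℝ → ℝ) (ψ' : ℝ → ℝ) (hψ : ∀ t, HasDerivAt ψ (ψ' t) t)
    (v : ℝ → EuclideanSpace ℝ (Fin 2)) (hv : ∀ t, v t = s • mvec (ψ t) + w)
    (hnz : ∀ t, v t ≠ 0)
    (vhat : ℝ → EuclideanSpace ℝ (Fin 2)) (hvhat : ∀ t, vhat t = ‖v t‖⁻¹ • v t) :
    ∀ t, HasDerivAt vhat
      (-((s * ψ' t / ‖v t‖) * ⟪vhat t, mvec (ψ t)⟫) • Emap (vhat t)) t := by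
  intro t
  have hv0 : ∀ u, v u 0 = s * Real.cos (ψ u) + w 0 := by
    intro u; rw [hv u]; simp [mvec]
  have hv1 : ∀ u, v u 1 = s * Real.sin (ψ u) + w 1 := by
    intro u; rw [hv u]; simp [mvec]
  set c := Real.cos (ψ t) with hc
  set sn := Real.sin (ψ t) with hsn
  set a := v t 0 with ha
  set b := v t 1 with hb
  have H0 : HasDerivAt (fun u => v u 0) (-(s * ψ' t * sn)) t := by
    have : HasDerivAt (fun u => s * Real.cos (ψ u) + w 0)
        (s * (-sn * ψ' t)) t :=
      (((hψ t).cos).const_mul s).add_const _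
    refine (this.congr_deriv (by ring)).congr_of_eventuallyEq ?_
    filter_upwards with u using (hv0 u)
  have H1 : HasDerivAt (fun u => v u 1) (s * ψ' t * c) t := by
    have : HasDerivAt (fun u => s * Real.sin (ψ u) + w 1)
        (s * (c * ψ' t)) t :=
      (((hψ t).sin).const_mul s).add_const _
    refine (this.congr_deriv (by ring)).congr_of_eventuallyEq ?_
    filter_upwards with u using (hv1 u)
  set a' : ℝ := -(s * ψ' t * sn) with ha'
  set b' : ℝ := s * ψ' t * c with hb'
  have hnormeq : ∀ u, ‖v u‖ = Real.sqrt ((v u 0) ^ 2 + (v u 1) ^ 2) := by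
    intro u
    rw [EuclideanSpace.norm_eq]
    congr 1
    simp [Fin.sum_univ_two, sq_abs]
  set n := ‖v t‖ with hn
  have hq : n ^ 2 = a ^ 2 + b ^ 2 := by
    rw [hn, hnormeq t]
    rw [Real.sq_sqrt (by positivity)]
  have hnpos : 0 < n := by
    rw [hn]; exact norm_pos_iff.mpr (hnz t)
  have hnne : n ≠ 0 := ne_of_gt hnpos
  have hqpos : 0 < a ^ 2 + b ^ 2 := by rw [← hq]; positivity
  have Hq : HasDerivAt (fun u => (v u 0) ^ 2 + (v u 1) ^ 2)
      (2 * a * a' + 2 * b * b') t := by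
    have := ((H0.pow 2).add (H1.pow 2))
    convert this using 1
    case e'_4 => rfl
    case e'_5 => rfl
    case e'_8 => rfl
    push_cast
    rw [ha, hb]
    ring
  have Hn : HasDerivAt (fun u => ‖v u‖) ((2 * a * a' + 2 * b * b') / (2 * n)) t := by
    have hne : (v t 0) ^ 2 + (v t 1) ^ 2 ≠ 0 := ne_of_gt hqpos
    have := Hq.sqrt hne
    have heq : Real.sqrt ((v t 0) ^ 2 + (v t 1) ^ 2) = n := (hnormeq t).symm
    rw [heq] at this
    refine this.congr_of_eventuallyEq ?_
    filter_upwards with u using (hnormeq u)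
  set n' : ℝ := (2 * a * a' + 2 * b * b') / (2 * n) with hn'
  have Hinv : HasDerivAt (fun u => ‖v u‖⁻¹) (-n' / n ^ 2) t := Hn.inv hnne
  have Hcomp : ∀ i : Fin 2, HasDerivAt (fun u => vhat u i)
      ((-n' / n ^ 2) * v t i + n⁻¹ * (if i = 0 then a' else b')) t := by
    intro i
    have hvhati : ∀ u, vhat u i = ‖v u‖⁻¹ * v u i := by
      intro u; rw [hvhat u]; simp
    have Hi : HasDerivAt (fun u => v u i) (if i = 0 then a' else b') t := by
      fin_cases i
      · simpa using H0
      · simpa using H1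
    refine ((Hinv.mul Hi).congr_deriv rfl).congr_of_eventuallyEq ?_
    filter_upwards with u using (hvhati u)
  refine hasDerivAt_E2 vhat _ t ?_
  intro i
  have hvh : vhat t = ‖v t‖⁻¹ • v t := hvhat t
  have hvh0 : vhat t 0 = n⁻¹ * a := by rw [hvh]; simp [hn, ha]
  have hvh1 : vhat t 1 = n⁻¹ * b := by rw [hvh]; simp [hn, hb]
  have hinner : ⟪vhat t, mvec (ψ t)⟫ = n⁻¹ * a * c + n⁻¹ * b * sn := by
    rw [show (inner ℝ (vhat t) (mvec (ψ t)) : ℝ) = ∑ i : Fin 2, vhat t i * mvec (ψ t) i from by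
      simp [PiLp.inner_apply, RCLike.inner_apply]; ring]
    rw [Fin.sum_univ_two, hvh0, hvh1]
    simp [mvec, hc, hsn]
  fin_cases i
  · convert Hcomp 0 using 1
    rfl
    show (-((s * ψ' t / n) * ⟪vhat t, mvec (ψ t)⟫) • Emap (vhat t)) 0
        = -n' / n ^ 2 * v t 0 + n⁻¹ * (if (0 : Fin 2) = 0 then a' else b')
    have h0 : (-((s * ψ' t / n) * ⟪vhat t, mvec (ψ t)⟫) • Emap (vhat t)) 0
        = -((s * ψ' t / n) * ⟪vhat t, mvec (ψ t)⟫) * vhat t 1 := by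
      simp [Emap]
    rw [h0, hinner, hvh1, if_pos rfl, hn', ha', hb', ← ha]
    rw [show -(s * ψ' t * sn) = -((s * ψ' t) * sn) from by ring,
        show s * ψ' t * c = (s * ψ' t) * c from rfl]
    exact aux0 a b c sn (s * ψ' t) n hnne hq
  · convert Hcomp 1 using 1
    rfl
    show (-((s * ψ' t / n) * ⟪vhat t, mvec (ψ t)⟫) • Emap (vhat t)) 1
        = -n' / n ^ 2 * v t 1 + n⁻¹ * (if (1 : Fin 2) = 0 then a' else b')
    have h1 : (-((s * ψ' t / n) * ⟪vhat t, mvec (ψ t)⟫) • Emap (vhat t)) 1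
        = -((s * ψ' t / n) * ⟪vhat t, mvec (ψ t)⟫) * (-(vhat t 0)) := by
      simp [Emap]
    rw [h1, hinner, hvh0, if_neg (by decide : ¬(1 : Fin 2) = 0), hn', ha', hb', ← hb]
    rw [show -(s * ψ' t * sn) = -((s * ψ' t) * sn) from by ring,
        show s * ψ' t * c = (s * ψ' t) * c from rfl]
    exact aux1 a b c sn (s * ψ' t) n hnne hq
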